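/- For a ≥ b ≥ c ≥ 0, the cokernel of a generic k[N]-module homomorphism from k[N]/(N^b) to k[N]/(N^a) ⊕ k[N]/(N^c) is isomorphic to k[N]/(N^{a+c−b}). More precisely, if f sends the generator of k[N]/(N^b) to (x, y) where x generates k[N]/(N^a) modulo N^{a−b} times a generator (i.e., x = N^{a−b}·u with u a generator) and y is a generator of k[N]/(N^c), then coker(f) ≅ k[N]/(N^{a+c−b}). -/

import Mathlib

/-- The cyclic `k[N]`-module `k[N]/(N^m)`, modeled as the quotient of the polynomial
ring by the ideal generated by `X^m`. -/
abbrev Cyc (k : Type*) [Field k] (m : ℕ) : Type _ :=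
  Polynomial k ⧸ Ideal.span {(Polynomial.X : Polynomial k) ^ m}

section Helpers
open Polynomial
variable {k : Type*} [Field k]


private lemma smul_eq' (m : ℕ) (p : Polynomial k) (u : Cyc k m) :
    p • u = Ideal.Quotient.mk _ p * u := by
  obtain ⟨q, rfl⟩ := Ideal.Quotient.mk_surjective u
  rw [← map_mul]; rfl

private lemma gen_unit (m : ℕ) (u : Cyc k m) (hu : Submodule.span (Polynomial k) {u} = ⊤) :
    IsUnit u := by
  have h1 : (1 : Cyc k m) ∈ Submodule.span (Polynomial k) {u} := by rw [hu]; trivial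
  obtain ⟨p, hp⟩ := Submodule.mem_span_singleton.mp h1
  exact IsUnit.of_mul_eq_one (a := u) (Ideal.Quotient.mk _ p) (by rw [← hp, smul_eq', mul_comm])

private lemma smul_zero_iff (m : ℕ) (u : Cyc k m) (hu : IsUnit u) (p : Polynomial k) :
    p • u = 0 ↔ (X : Polynomial k) ^ m ∣ p := by
  rw [smul_eq', mul_comm, hu.mul_right_eq_zero, Ideal.Quotient.eq_zero_iff_mem,
    Ideal.mem_span_singleton]

end Helpers

open Polynomial in
set_option maxHeartbeats 2000000 in
/-- For `a ≥ b ≥ c`, the cokernel of a generic `k[N]`-module homomorphism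
`k[N]/(N^b) → k[N]/(N^a) ⊕ k[N]/(N^c)` is isomorphic to `k[N]/(N^{a+c-b})`: if `f`
sends the generator to `(X^{a-b} • u, y)` with `u` a generator of `k[N]/(N^a)` and
`y` a generator of `k[N]/(N^c)`, then `coker f ≅ k[N]/(N^{a+c−b})`. -/
theorem stmt_5 (k : Type*) [Field k] (a b c : ℕ) (hba : b ≤ a) (hcb : c ≤ b)
    (u : Cyc k a) (y : Cyc k c)
    (hu : Submodule.span (Polynomial k) {u} = ⊤)
    (hy : Submodule.span (Polynomial k) {y} = ⊤)
    (f : Cyc k b →ₗ[Polynomial k] Cyc k a × Cyc k c)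
    (hf : f (Ideal.Quotient.mk _ 1) = ((Polynomial.X : Polynomial k) ^ (a - b) • u, y)) :
    Nonempty (((Cyc k a × Cyc k c) ⧸ LinearMap.range f) ≃ₗ[Polynomial k]
      Cyc k (a + c - b)) := by
  set R := Polynomial k
  set M := (Cyc k a × Cyc k c)
  set d := a + c - b with hd
  set v : M := ((X : R) ^ (a - b) • u, y) with hv
  set e : M := (u, 0) with he
  have hXc_y : (X : R) ^ c • y = 0 := by
    rw [smul_eq']
    have : Ideal.Quotient.mk (Ideal.span {(X : R) ^ c}) ((X : R) ^ c) = 0 := by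
      rw [Ideal.Quotient.eq_zero_iff_mem]; exact Ideal.subset_span rfl
    rw [this, zero_mul]
  have hca : c + (a - b) = d := by omega
  have hdbc : d + (b - c) = a := by omega
  have hspan1 : Submodule.span R {(1 : Cyc k b)} = ⊤ := by
    rw [Submodule.eq_top_iff']
    intro z
    obtain ⟨q, rfl⟩ := Ideal.Quotient.mk_surjective z
    exact Submodule.mem_span_singleton.mpr ⟨q, by rw [smul_eq', mul_one]⟩
  have hone : f 1 = v := by
    rw [show (1 : Cyc k b) = Ideal.Quotient.mk _ 1 from (map_one _).symm, hf]
  have hrange : LinearMap.range f = Submodule.span R {v} := by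
    rw [LinearMap.range_eq_map, ← hspan1, Submodule.map_span, Set.image_singleton, hone]
  set g : R →ₗ[R] (M ⧸ LinearMap.range f) :=
    (Submodule.mkQ (LinearMap.range f)).comp (LinearMap.toSpanSingleton R M e) with hg
  have hvmem : v ∈ LinearMap.range f := by rw [hrange]; exact Submodule.mem_span_singleton_self v
  have hsurj : Function.Surjective g := by
    intro z
    obtain ⟨⟨m1, m2⟩, rfl⟩ := Submodule.mkQ_surjective _ z
    have h1 : m1 ∈ Submodule.span R {u} := by rw [hu]; trivial
    have h2 : m2 ∈ Submodule.span R {y} := by rw [hy]; trivial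
    obtain ⟨p, rfl⟩ := Submodule.mem_span_singleton.mp h1
    obtain ⟨q, rfl⟩ := Submodule.mem_span_singleton.mp h2
    refine ⟨p - q * (X : R) ^ (a - b), ?_⟩
    have hgval : g (p - q * (X : R) ^ (a - b))
        = Submodule.mkQ _ ((p - q * (X : R) ^ (a - b)) • e) := rfl
    rw [hgval, Submodule.mkQ_apply, Submodule.mkQ_apply, Submodule.Quotient.eq]
    have hdiff : (p - q * (X : R) ^ (a - b)) • e - (p • u, q • y) = (-q) • v := by
      rw [hv, he, Prod.smul_mk, Prod.smul_mk, Prod.mk_sub_mk, Prod.mk.injEq]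
      constructor
      · rw [sub_smul, mul_smul, neg_smul]
        abel
      · rw [smul_zero, neg_smul]
        abel
    rw [hdiff]
    exact Submodule.smul_mem _ _ hvmem
  have huu : IsUnit u := gen_unit a u hu
  have hyy : IsUnit y := gen_unit c y hy
  have hker : LinearMap.ker g = (Ideal.span {(X : R) ^ d} : Ideal R) := by
    ext p
    rw [LinearMap.mem_ker, Ideal.mem_span_singleton]
    have hgp : g p = Submodule.mkQ _ (p • e) := rfl
    rw [hgp, Submodule.mkQ_apply, Submodule.Quotient.mk_eq_zero, hrange,
      Submodule.mem_span_singleton]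
    constructor
    · rintro ⟨q, hq⟩
      rw [hv, he, Prod.smul_mk, Prod.smul_mk, Prod.mk.injEq] at hq
      obtain ⟨hq1, hq2⟩ := hq
      rw [smul_zero] at hq2
      obtain ⟨r, hr⟩ := (smul_zero_iff c y hyy q).mp hq2
      have hXa : (X : R) ^ a ∣ (q * (X : R) ^ (a - b) - p) := by
        apply (smul_zero_iff a u huu _).mp
        rw [sub_smul, mul_smul, hq1, sub_self]
      obtain ⟨s, hs⟩ := hXa
      have h2 : (X : R) ^ a = (X : R) ^ d * (X : R) ^ (b - c) := by rw [← pow_add, hdbc]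
      have h3 : q * (X : R) ^ (a - b) = (X : R) ^ d * r := by
        rw [hr, ← hca, pow_add]; ring
      refine ⟨r - (X : R) ^ (b - c) * s, ?_⟩
      have hp : p = q * (X : R) ^ (a - b) - (X : R) ^ a * s := by rw [← hs]; ring
      rw [hp, h3, h2]; ring
    · rintro ⟨t, rfl⟩
      refine ⟨t * (X : R) ^ c, ?_⟩
      rw [hv, he, Prod.smul_mk, Prod.smul_mk, Prod.mk.injEq]
      constructor
      · rw [smul_smul]
        congr 1
        rw [← hca, pow_add]; ring
      · rw [mul_smul, hXc_y, smul_zero, smul_zero]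
  exact ⟨(LinearMap.quotKerEquivOfSurjective g hsurj).symm.trans
    (Submodule.quotEquivOfEq _ _ hker)⟩
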